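/- Let G : [0, F*] → ℝ be continuously differentiable with G(0) = 0 and G(F*) > 0, and let F_m ∈ (0, F*] be a point where G attains its maximum on [0, F*], chosen minimal so that G(F) < G(F_m) for all F < F_m. Then the Cauchy problem F' = √(2(G(F_m) - G(F))), F(0) = 0, has a solution F on [0,∞) which is nondecreasing, bounded by F_m, converges to F_m at +∞, and satisfies -F'' = G'(F) on the set where F < F_m. -/

import Mathlib

open Filter Topology Set

theorem stmt4 (Fstar : ℝ) (hFs : 0 < Fstar)
    (G : ℝ → ℝ) (hG : ContDiffOn ℝ 1 G (Set.Icc 0 Fstar))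
    (hG0 : G 0 = 0) (hGpos : 0 < G Fstar)
    (Fm : ℝ) (hFm : Fm ∈ Set.Ioc 0 Fstar)
    (hmax : ∀ u ∈ Set.Icc 0 Fstar, G u ≤ G Fm)
    (hminimal : ∀ u ∈ Set.Icc 0 Fstar, u < Fm → G u < G Fm) :
    ∃ F : ℝ → ℝ, F 0 = 0 ∧
      (∀ x ≥ 0, HasDerivAt F (Real.sqrt (2 * (G Fm - G (F x)))) x) ∧
      MonotoneOn F (Set.Ici 0) ∧
      (∀ x ≥ 0, 0 ≤ F x ∧ F x ≤ Fm) ∧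
      Tendsto F atTop (𝓝 Fm) ∧
      (∀ x ≥ 0, F x < Fm → -(deriv (deriv F)) x = deriv G (F x)) := by
  classical
  obtain ⟨hFm0, hFmFs⟩ := hFm
  set M := G Fm with hMdef
  have hMpos : 0 < M := hGpos.trans_le (hmax Fstar ⟨hFs.le, le_rfl⟩)
  set g : ℝ → ℝ := fun u => Real.sqrt (2 * (M - G u)) with hgdef
  set ψ : ℝ → ℝ := fun u => (g (max u 0))⁻¹ with hψdef
  have hGc : ContinuousOn G (Icc 0 Fstar) := hG.continuousOn
  have hsub : Ico (0:ℝ) Fm ⊆ Icc 0 Fstar := fun u hu => ⟨hu.1, hu.2.le.trans hFmFs⟩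
  have hGlt : ∀ u ∈ Ico (0:ℝ) Fm, G u < M := fun u hu => hminimal u (hsub hu) hu.2
  have hgpos : ∀ u ∈ Ico (0:ℝ) Fm, 0 < g u := by
    intro u hu
    have := hGlt u hu
    exact Real.sqrt_pos.2 (by linarith)
  have hmx : ∀ y ∈ Iio Fm, max y 0 ∈ Ico (0:ℝ) Fm :=
    fun y hy => ⟨le_max_right _ _, max_lt hy hFm0⟩
  have hψpos : ∀ y ∈ Iio Fm, 0 < ψ y := fun y hy => inv_pos.2 (hgpos _ (hmx y hy))
  have hgcont : ContinuousOn g (Icc 0 Fstar) := by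
    apply Real.continuous_sqrt.comp_continuousOn
    exact continuousOn_const.mul (continuousOn_const.sub hGc)
  have hψcont : ContinuousOn ψ (Iio Fm) := by
    have hmaxc : ContinuousOn (fun y : ℝ => max y 0) (Iio Fm) :=
      (continuous_id.max continuous_const).continuousOn
    have : ContinuousOn (fun y => g (max y 0)) (Iio Fm) :=
      (hgcont.mono hsub).comp hmaxc (fun y hy => hmx y hy)
    exact this.inv₀ (fun y hy => (hgpos _ (hmx y hy)).ne')
  set Φ : ℝ → ℝ := fun y => ∫ u in (0:ℝ)..y, ψ u with hΦdef
  have hΦd : ∀ y ∈ Iio Fm, HasDerivAt Φ (ψ y) y := by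
    intro y hy
    have hsub2 : uIcc (0:ℝ) y ⊆ Iio Fm := fun u hu =>
      lt_of_le_of_lt hu.2 (max_lt hFm0 hy)
    have hint : IntervalIntegrable ψ MeasureTheory.volume 0 y :=
      (hψcont.mono hsub2).intervalIntegrable
    exact intervalIntegral.integral_hasDerivAt_right hint
      (hψcont.stronglyMeasurableAtFilter isOpen_Iio y hy)
      (hψcont.continuousAt (Iio_mem_nhds hy))
  have hΦc : ContinuousOn Φ (Iio Fm) :=
    fun y hy => (hΦd y hy).continuousAt.continuousWithinAt
  have hΦmono : StrictMonoOn Φ (Iio Fm) := by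
    apply strictMonoOn_of_deriv_pos (convex_Iio Fm) hΦc
    intro y hy
    rw [interior_Iio] at hy
    rw [(hΦd y hy).deriv]
    exact hψpos y hy
  have hΦ0 : Φ 0 = 0 := intervalIntegral.integral_same
  have hψ0pos : 0 < ψ 0 := hψpos 0 hFm0
  have hΦneg : ∀ y ≤ (0:ℝ), Φ y = ψ 0 * y := by
    intro y hy
    have hcg : EqOn ψ (fun _ => ψ 0) (uIcc 0 y) := by
      intro u hu
      have hu0 : u ≤ 0 := le_trans hu.2 (by simp [hy])
      simp only [hψdef]
      rw [max_eq_right hu0, max_self]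
    rw [hΦdef]
    simp only
    rw [intervalIntegral.integral_congr hcg, intervalIntegral.integral_const]
    simp [mul_comm]
  set S : ℝ → Set ℝ := fun x => {y : ℝ | y < Fm ∧ Φ y ≤ x} with hSdef
  have hSne : ∀ x, (S x).Nonempty := by
    intro x
    refine ⟨-(|x| / ψ 0), ?_, ?_⟩
    · exact lt_of_le_of_lt (neg_nonpos.2 (div_nonneg (abs_nonneg x) hψ0pos.le)) hFm0
    · rw [hΦneg _ (neg_nonpos.2 (div_nonneg (abs_nonneg x) hψ0pos.le))]
      rw [mul_neg, mul_comm, div_mul_cancel₀ _ hψ0pos.ne']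
      exact neg_abs_le x
  have hSbdd : ∀ x, BddAbove (S x) := fun x => ⟨Fm, fun z hz => hz.1.le⟩
  set Fi : ℝ → ℝ := fun x => sSup (S x) with hFidef
  have hFile : ∀ x, Fi x ≤ Fm := fun x => csSup_le (hSne x) (fun z hz => hz.1.le)
  have hFimono : Monotone Fi := fun x y hxy =>
    csSup_le_csSup (hSbdd y) (hSne x) (fun z hz => ⟨hz.1, hz.2.trans hxy⟩)
  have hFi0 : Fi 0 = 0 := by
    apply le_antisymm
    · apply csSup_le (hSne 0)
      intro z hz
      by_contra hc
      push_neg at hc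
      have := hΦmono hFm0 hz.1 hc
      rw [hΦ0] at this
      exact absurd hz.2 (by linarith)
    · exact le_csSup (hSbdd 0) ⟨hFm0, hΦ0.le⟩
  have hFinneg : ∀ x, 0 ≤ x → 0 ≤ Fi x := fun x hx => hFi0 ▸ hFimono hx
  -- Key: Φ is a left inverse
  have hE : ∀ x, Fi x < Fm → Φ (Fi x) = x := by
    intro x hlt
    have h1 : Φ (Fi x) ≤ x := by
      have htd : Tendsto Φ (𝓝[<] (Fi x)) (𝓝 (Φ (Fi x))) :=
        (hΦd _ hlt).continuousAt.continuousWithinAt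
      refine le_of_tendsto htd ?_
      filter_upwards [self_mem_nhdsWithin] with y hy
      obtain ⟨z, hzS, hyz⟩ := exists_lt_of_lt_csSup (hSne x) hy
      exact (hΦmono (hyz.trans hzS.1) hzS.1 hyz).le.trans hzS.2
    refine le_antisymm h1 ?_
    by_contra hc
    push_neg at hc
    have hU : {y | Φ y < x} ∈ 𝓝 (Fi x) :=
      (hΦd _ hlt).continuousAt.preimage_mem_nhds (Iio_mem_nhds hc)
    have hU2 : {y | Φ y < x} ∩ Iio Fm ∩ Ioi (Fi x) ∈ 𝓝[>] (Fi x) :=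
      Filter.inter_mem (nhdsWithin_le_nhds (Filter.inter_mem hU (Iio_mem_nhds hlt)))
        self_mem_nhdsWithin
    obtain ⟨y, ⟨⟨hy1, hy2⟩, hy3⟩⟩ := Filter.nonempty_of_mem hU2
    have : y ≤ Fi x := le_csSup (hSbdd x) ⟨hy2, hy1.le⟩
    exact absurd hy3 (not_lt.2 this)
  have hFicont : ∀ x, ContinuousAt Fi x := by
    intro x
    refine tendsto_order.2 ⟨?_, ?_⟩
    · intro a ha
      obtain ⟨z, hzS, haz⟩ := exists_lt_of_lt_csSup (hSne x) ha
      have hz' : (a + z) / 2 < Fm := lt_trans (by linarith) hzS.1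
      have h1 : Φ ((a + z) / 2) < Φ z := hΦmono hz' hzS.1 (by linarith)
      have h2 : Φ ((a + z) / 2) < x := lt_of_lt_of_le h1 hzS.2
      filter_upwards [Ioi_mem_nhds h2] with y hy
      exact lt_of_lt_of_le (by linarith : a < (a + z) / 2)
        (le_csSup (hSbdd y) ⟨hz', (le_of_lt hy)⟩)
    · intro b hb
      rcases lt_or_ge Fm b with h | h
      · filter_upwards with y
        exact lt_of_le_of_lt (hFile y) h
      · have hFixFm : Fi x < Fm := lt_of_lt_of_le hb h
        have hw1 : Fi x < (Fi x + b) / 2 := by linarith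
        have hw2 : (Fi x + b) / 2 < b := by linarith
        have hwFm : (Fi x + b) / 2 < Fm := lt_of_lt_of_le hw2 h
        have h1 : Φ (Fi x) < Φ ((Fi x + b) / 2) := hΦmono hFixFm hwFm hw1
        rw [hE x hFixFm] at h1
        filter_upwards [Iio_mem_nhds h1] with y hy
        have hFiy : Fi y ≤ (Fi x + b) / 2 := by
          apply csSup_le (hSne y)
          intro z hz
          by_contra hcz
          push_neg at hcz
          have := hΦmono hwFm hz.1 hcz
          have := hz.2
          linarith [mem_Iio.mp hy]
        exact lt_of_le_of_lt hFiy hw2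
  have hFidermain : ∀ x, Fi x < Fm → HasDerivAt Fi (g (max (Fi x) 0)) x := by
    intro x hlt
    have hev : ∀ᶠ y in 𝓝 x, Φ (Fi y) = y := by
      filter_upwards [(hFicont x).preimage_mem_nhds (Iio_mem_nhds hlt)] with y hy
      exact hE y hy
    have := HasDerivAt.of_local_left_inverse (hFicont x) (hΦd (Fi x) hlt)
      (hψpos _ hlt).ne' hev
    rwa [hψdef, inv_inv] at this
  have hFitendsto : Tendsto Fi atTop (𝓝 Fm) := by
    have hbdd : BddAbove (range Fi) := ⟨Fm, by rintro _ ⟨y, rfl⟩; exact hFile y⟩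
    have htd := tendsto_atTop_ciSup hFimono hbdd
    have hLle : (⨆ y, Fi y) ≤ Fm := ciSup_le hFile
    rcases eq_or_lt_of_le hLle with h | h
    · rwa [h] at htd
    · exfalso
      have hkey : ∀ y, Φ (Fi y) = y := fun y =>
        hE y (lt_of_le_of_lt (le_ciSup hbdd y) h)
      have : ∀ y : ℝ, y ≤ Φ (⨆ z, Fi z) := by
        intro y
        rw [← hkey y]
        exact hΦmono.monotoneOn (lt_of_le_of_lt (le_ciSup hbdd y) h) h (le_ciSup hbdd y)
      have := this (Φ (⨆ z, Fi z) + 1)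
      linarith
  -- junction: where Fi reaches Fm, derivative is 0
  have hjunction : ∀ x, Fi x = Fm → HasDerivAt Fi 0 x := by
    intro x hx
    set T := {t : ℝ | Fi t = Fm} with hTdef
    have hTne : T.Nonempty := ⟨x, hx⟩
    have hTbdd : BddBelow T := by
      refine ⟨0, fun t ht => ?_⟩
      by_contra hc
      push_neg at hc
      have : Fi t ≤ Fi 0 := hFimono hc.le
      rw [hFi0] at this
      rw [show Fi t = Fm from ht] at this
      linarith
    have hTclosed : IsClosed T :=
      isClosed_eq (continuous_iff_continuousAt.2 hFicont) continuous_const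
    have hx0T : Fi (sInf T) = Fm := hTclosed.csInf_mem hTne hTbdd
    have hx0pos : 0 < sInf T := by
      rcases lt_or_ge 0 (sInf T) with h | h
      · exact h
      · exfalso
        have : Fi (sInf T) ≤ Fi 0 := hFimono h
        rw [hFi0, hx0T] at this
        linarith
    have hxge : sInf T ≤ x := csInf_le hTbdd hx
    rcases eq_or_lt_of_le hxge with hxeq | hxgt
    · -- x = sInf T : the hard junction
      rw [← hxeq]
      rw [hasDerivAt_iff_isLittleO, Asymptotics.isLittleO_iff]
      intro c hc
      -- choose δ such that g is small near Fm
      have hgFm : g Fm = 0 := by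
        rw [hgdef]; simp [hMdef]
      have hgten : Tendsto g (𝓝[Icc 0 Fstar] Fm) (𝓝 0) := by
        have := hgcont Fm ⟨hFm0.le, hFmFs⟩
        rwa [ContinuousWithinAt, hgFm] at this
      have hev : ∀ᶠ y in 𝓝[Icc 0 Fstar] Fm, g y < c := hgten.eventually_lt_const hc
      obtain ⟨δ, hδpos, hδ⟩ := Metric.mem_nhdsWithin_iff.1 hev
      have hevFi : ∀ᶠ t in 𝓝 (sInf T), Fm - δ < Fi t := by
        have : ∀ᶠ z in 𝓝 (Fi (sInf T)), Fm - δ < z := by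
          rw [hx0T]; exact eventually_gt_nhds (by linarith)
        exact (hFicont (sInf T)).eventually this
      filter_upwards [hevFi, Ioi_mem_nhds hx0pos] with x' h1 h2
      rcases le_or_gt (sInf T) x' with hcase | hcase
      · have hFx' : Fi x' = Fm := le_antisymm (hFile x') (hx0T ▸ hFimono hcase)
        have hz : Fi x' - Fi (sInf T) - (x' - sInf T) • (0:ℝ) = 0 := by
          rw [hFx', hx0T]; simp
        rw [hz, norm_zero]; positivity
      · -- x' < sInf T
        have hFilt : ∀ t, t < sInf T → Fi t < Fm := by
          intro t ht
          rcases eq_or_lt_of_le (hFile t) with h | h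
          · exact absurd (csInf_le hTbdd h) (not_le.2 ht)
          · exact h
        have hgb : ∀ t, t ∈ Icc x' (sInf T) → t < sInf T → g (Fi t) < c := by
          intro t ht htlt
          apply hδ
          constructor
          · rw [Metric.mem_ball, Real.dist_eq, abs_lt]
            have h1' : Fm - δ < Fi t := lt_of_lt_of_le h1 (hFimono ht.1)
            have h2' : Fi t ≤ Fm := hFile t
            constructor <;> linarith
          · exact ⟨hFinneg t (le_trans h2.le ht.1), (hFile t).trans hFmFs⟩
        have key : ∀ s ∈ Ioo x' (sInf T), ‖Fi s - Fi x'‖ ≤ c * ‖s - x'‖ := by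
          intro s hs
          have hconv : Convex ℝ (Icc x' s) := convex_Icc _ _
          refine hconv.norm_image_sub_le_of_norm_hasDerivWithin_le
            (f' := fun t => g (max (Fi t) 0)) ?_ ?_ ⟨le_refl x', hs.1.le⟩ ⟨hs.1.le, le_refl s⟩
          · intro t ht
            have htlt : t < sInf T := lt_of_le_of_lt ht.2 hs.2
            exact (hFidermain t (hFilt t htlt)).hasDerivWithinAt
          · intro t ht
            have htlt : t < sInf T := lt_of_le_of_lt ht.2 hs.2
            have hmax' : max (Fi t) 0 = Fi t := max_eq_left (hFinneg t (le_trans h2.le ht.1))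
            show ‖g (max (Fi t) 0)‖ ≤ c
            rw [hmax', Real.norm_eq_abs, abs_of_nonneg (Real.sqrt_nonneg _)]
            exact (hgb t ⟨ht.1, htlt.le⟩ htlt).le
        have hlim1 : Tendsto (fun s => ‖Fi s - Fi x'‖) (𝓝[<] (sInf T)) (𝓝 ‖Fi (sInf T) - Fi x'‖) := by
          exact (((hFicont (sInf T)).tendsto.mono_left nhdsWithin_le_nhds).sub
            tendsto_const_nhds).norm
        have hlim2 : Tendsto (fun s => c * ‖s - x'‖) (𝓝[<] (sInf T)) (𝓝 (c * ‖sInf T - x'‖)) := by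
          exact (tendsto_const_nhds.mul (((tendsto_id.sub tendsto_const_nhds).norm).mono_left
            nhdsWithin_le_nhds))
        have hfin : ‖Fi (sInf T) - Fi x'‖ ≤ c * ‖sInf T - x'‖ := by
          refine le_of_tendsto_of_tendsto hlim1 hlim2 ?_
          have hoo : Ioo x' (sInf T) ∈ 𝓝[<] (sInf T) := Ioo_mem_nhdsLT_of_mem ⟨hcase, le_refl _⟩
          filter_upwards [hoo] with s hs
          exact key s hs
        rw [hx0T] at hfin
        calc ‖Fi x' - Fi (sInf T) - (x' - sInf T) • (0:ℝ)‖
            = ‖Fm - Fi x'‖ := by rw [smul_zero, sub_zero, hx0T, norm_sub_rev]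
          _ ≤ c * ‖sInf T - x'‖ := hfin
          _ = c * ‖x' - sInf T‖ := by rw [norm_sub_rev]
    · -- x > sInf T : locally constant
      obtain ⟨x₃, hx₃T, hx₃lt⟩ := exists_lt_of_csInf_lt hTne hxgt
      have hev : Fi =ᶠ[𝓝 x] fun _ => Fm := by
        filter_upwards [Ioi_mem_nhds hx₃lt] with y hy
        exact le_antisymm (hFile y) ((show Fi x₃ = Fm from hx₃T) ▸ hFimono (le_of_lt hy))
      exact (hasDerivAt_const x Fm).congr_of_eventuallyEq hev
  -- the full solution, extended to x < 0
  set a : ℝ := deriv G 0 with hadef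
  set E : ℝ → ℝ := fun x => Real.sqrt (2*M) * x - a * x^2/2 with hEdef
  set F : ℝ → ℝ := fun x => if x < 0 then E x else Fi x with hFdef
  have hFeqFi : ∀ x, 0 ≤ x → F x = Fi x := fun x hx => if_neg (not_lt.2 hx)
  have hF0 : F 0 = 0 := by rw [hFeqFi 0 le_rfl, hFi0]
  have hFev : ∀ x, 0 < x → F =ᶠ[𝓝 x] Fi := by
    intro x hx
    filter_upwards [Ioi_mem_nhds hx] with y hy
    exact hFeqFi y (le_of_lt hy)
  have hg0 : g 0 = Real.sqrt (2*M) := by rw [hgdef]; simp [hG0]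
  have hEd : ∀ y : ℝ, HasDerivAt E (Real.sqrt (2*M) - a * y) y := by
    intro y
    have h1 : HasDerivAt (fun x : ℝ => Real.sqrt (2*M) * x) (Real.sqrt (2*M)) y := by
      simpa using (hasDerivAt_id y).const_mul (Real.sqrt (2*M))
    have h2 : HasDerivAt (fun x : ℝ => a * x^2/2) (a * y) y := by
      have := ((hasDerivAt_pow 2 y).const_mul a).div_const 2
      exact this.congr_deriv (by push_cast; ring)
    exact h1.sub h2
  -- first order equation
  have hderiv : ∀ x, 0 ≤ x → HasDerivAt F (Real.sqrt (2 * (M - G (F x)))) x := by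
    intro x hx
    rcases eq_or_lt_of_le (hFile x) with hceq | hclt
    · -- F x = Fm
      have hxpos : 0 < x := by
        rcases eq_or_lt_of_le hx with h | h
        · exfalso; rw [← h] at hceq; rw [hFi0] at hceq; linarith
        · exact h
      have hval : Real.sqrt (2 * (M - G (F x))) = 0 := by
        rw [hFeqFi x hx, hceq, ← hMdef]
        simp
      rw [hval]
      exact ((hFev x hxpos).hasDerivAt_iff).2 (hjunction x hceq)
    · -- F x < Fm
      rcases eq_or_lt_of_le hx with hxeq | hxpos
      · -- x = 0
        subst hxeq
        have hval : Real.sqrt (2 * (M - G (F 0))) = Real.sqrt (2*M) := by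
          rw [hF0, hG0, sub_zero]
        rw [hval]
        have hleft : HasDerivWithinAt F (Real.sqrt (2*M)) (Iic 0) 0 := by
          refine ((hEd 0).sub_const 0).hasDerivWithinAt.congr ?_ ?_ |>.congr_deriv (by ring)
          · intro y hy
            rcases eq_or_lt_of_le (mem_Iic.1 hy) with h | h
            · subst h; rw [hF0, hEdef]; simp
            · rw [hFdef]; simp [if_pos h]
          · rw [hF0, hEdef]; simp
        have hright : HasDerivWithinAt F (Real.sqrt (2*M)) (Ici 0) 0 := by
          have h0lt : Fi 0 < Fm := by rw [hFi0]; exact hFm0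
          have := (hFidermain 0 h0lt).hasDerivWithinAt (s := Ici 0)
          rw [hFi0, max_self, hg0] at this
          exact this.congr (fun y hy => hFeqFi y hy) (hFeqFi 0 le_rfl)
        have := hleft.union hright
        rwa [Iic_union_Ici, hasDerivWithinAt_univ] at this
      · -- x > 0
        have hd := hFidermain x hclt
        rw [max_eq_left (hFinneg x hx)] at hd
        have : HasDerivAt F (g (Fi x)) x := ((hFev x hxpos).hasDerivAt_iff).2 hd
        rw [hFeqFi x hx]
        exact this
  have hFbound : ∀ x, 0 ≤ x → 0 ≤ F x ∧ F x ≤ Fm := by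
    intro x hx
    rw [hFeqFi x hx]
    exact ⟨hFinneg x hx, hFile x⟩
  have hFmonoOn : MonotoneOn F (Ici 0) := by
    intro x hx y hy hxy
    rw [hFeqFi x hx, hFeqFi y hy]
    exact hFimono hxy
  have hFtend : Tendsto F atTop (𝓝 Fm) := by
    apply hFitendsto.congr'
    filter_upwards [eventually_ge_atTop (0:ℝ)] with y hy
    exact (hFeqFi y hy).symm
  -- derivative facts for G and g
  have hGdiff : DifferentiableOn ℝ G (Icc 0 Fstar) := hG.differentiableOn one_ne_zero
  have hGdAt : ∀ u ∈ Ioo (0:ℝ) Fstar, HasDerivAt G (deriv G u) u := by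
    intro u hu
    exact ((hGdiff u (Ioo_subset_Icc_self hu)).differentiableAt
      (Icc_mem_nhds hu.1 hu.2)).hasDerivAt
  have hgdAt : ∀ u, u ∈ Ioo (0:ℝ) Fstar → G u < M → HasDerivAt g (-(deriv G u) / g u) u := by
    intro u hu hGu
    have hin : HasDerivAt (fun v => 2*(M - G v)) (2*(0 - deriv G u)) u :=
      ((hasDerivAt_const u M).sub (hGdAt u hu)).const_mul 2
    have hne : 2*(M - G u) ≠ 0 := by
      have : 0 < M - G u := by linarith
      positivity
    have hpos : 0 < Real.sqrt (2*(M - G u)) := Real.sqrt_pos.2 (by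
      have : 0 < M - G u := by linarith
      positivity)
    have := hin.sqrt hne
    convert this using 1
    show -(deriv G u) / Real.sqrt (2*(M - G u))
      = 2*(0 - deriv G u) / (2 * Real.sqrt (2*(M - G u)))
    field_simp
    ring
  -- second-order equation
  have hsecond : ∀ x, 0 ≤ x → F x < Fm → -(deriv (deriv F)) x = deriv G (F x) := by
    intro x hx hlt
    rw [hFeqFi x hx] at hlt ⊢
    rcases eq_or_lt_of_le hx with hxeq | hxpos
    · -- x = 0
      subst hxeq
      set b : ℝ := derivWithin G (Icc 0 Fstar) 0 with hbdef
      have hGd0 : HasDerivWithinAt G b (Icc 0 Fstar) 0 :=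
        (hGdiff 0 ⟨le_rfl, hFs.le⟩).hasDerivWithinAt
      have h2M : (2*(M - G 0) : ℝ) ≠ 0 := by
        rw [hG0, sub_zero]; positivity
      have hgd0 : HasDerivWithinAt g (2*(0 - b) / (2 * Real.sqrt (2*(M - G 0)))) (Icc 0 Fstar) 0 :=
        (((hasDerivWithinAt_const 0 _ M).sub hGd0).const_mul 2).sqrt h2M
      have hsqpos : 0 < Real.sqrt (2*M) := Real.sqrt_pos.2 (by positivity)
      have hgd0' : HasDerivWithinAt g (-b / Real.sqrt (2*M)) (Icc 0 Fstar) 0 := by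
        convert hgd0 using 1
        rw [hG0, sub_zero]
        field_simp
        ring
      have hFider0 : HasDerivAt Fi (Real.sqrt (2*M)) 0 := by
        have h0lt : Fi 0 < Fm := by rw [hFi0]; exact hFm0
        have := hFidermain 0 h0lt
        rwa [hFi0, max_self, hg0] at this
      have hmapsTo : MapsTo Fi (Ici 0) (Icc 0 Fstar) :=
        fun y hy => ⟨hFinneg y hy, (hFile y).trans hFmFs⟩
      have hcomp0 : HasDerivWithinAt (fun y => g (Fi y))
          (-b / Real.sqrt (2*M) * Real.sqrt (2*M)) (Ici 0) 0 := by
        have hgat : HasDerivWithinAt g (-b / Real.sqrt (2*M)) (Icc 0 Fstar) (Fi 0) := by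
          rw [hFi0]; exact hgd0'
        exact HasDerivWithinAt.comp (h₂ := g) 0 hgat hFider0.hasDerivWithinAt hmapsTo
      have hcompval : -b / Real.sqrt (2*M) * Real.sqrt (2*M) = -b :=
        div_mul_cancel₀ _ hsqpos.ne'
      rw [hcompval] at hcomp0
      have hderivF0 : deriv F 0 = Real.sqrt (2*M) := by
        rw [(hderiv 0 le_rfl).deriv, hF0, hG0, sub_zero]
      have hUm : {y | Fi y < Fm} ∈ 𝓝 (0:ℝ) :=
        (hFicont 0).preimage_mem_nhds (Iio_mem_nhds (by rw [hFi0]; exact hFm0))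
      have hdFIci : HasDerivWithinAt (deriv F) (-b) (Ici 0) 0 := by
        apply (hasDerivWithinAt_inter hUm).1
        refine (hcomp0.mono inter_subset_left).congr ?_ ?_
        · intro y hy
          rcases eq_or_lt_of_le (mem_Ici.1 hy.1) with h | h
          · rw [← h, hderivF0, hFi0, hg0]
          · have hd := hFidermain y hy.2
            rw [max_eq_left (hFinneg y h.le)] at hd
            exact (((hFev y h).hasDerivAt_iff).2 hd).deriv
        · rw [hderivF0, hFi0, hg0]
      have hdFIic : HasDerivWithinAt (deriv F) (-a) (Iic 0) 0 := by
        have hL : HasDerivAt (fun t : ℝ => Real.sqrt (2*M) - a*t) (-a) 0 := by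
          simpa using ((hasDerivAt_id (0:ℝ)).const_mul a).const_sub
            (Real.sqrt (2*M))
        refine hL.hasDerivWithinAt.congr ?_ ?_
        · intro y hy
          rcases eq_or_lt_of_le (mem_Iic.1 hy) with h | h
          · rw [h, hderivF0]; ring
          · have hevE : F =ᶠ[𝓝 y] E := by
              filter_upwards [Iio_mem_nhds h] with z hz
              exact if_pos hz
            have hdE : HasDerivAt F (Real.sqrt (2*M) - a*y) y :=
              (hevE.hasDerivAt_iff).2 (hEd y)
            exact hdE.deriv
        · rw [hderivF0]; ring
      by_cases hab : a = b
      · rw [← hab] at hdFIci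
        have hD : HasDerivAt (deriv F) (-a) 0 := by
          have := hdFIic.union hdFIci
          rwa [Iic_union_Ici, hasDerivWithinAt_univ] at this
        rw [hD.deriv, hFi0, neg_neg, hadef]
      · have hbne : deriv (deriv F) 0 = 0 := by
          apply deriv_zero_of_not_differentiableAt
          intro hdiff
          have hD := hdiff.hasDerivAt
          have e1 : derivWithin (deriv F) (Iic 0) 0 = -a :=
            hdFIic.derivWithin ((uniqueDiffOn_Iic 0) 0 self_mem_Iic)
          have e1' : derivWithin (deriv F) (Iic 0) 0 = deriv (deriv F) 0 :=
            (hD.hasDerivWithinAt).derivWithin ((uniqueDiffOn_Iic 0) 0 self_mem_Iic)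
          have e2 : derivWithin (deriv F) (Ici 0) 0 = -b :=
            hdFIci.derivWithin ((uniqueDiffOn_Ici 0) 0 self_mem_Ici)
          have e2' : derivWithin (deriv F) (Ici 0) 0 = deriv (deriv F) 0 :=
            (hD.hasDerivWithinAt).derivWithin ((uniqueDiffOn_Ici 0) 0 self_mem_Ici)
          apply hab
          have : -a = -b := by rw [← e1, e1', ← e2', e2]
          linarith
        have hGnd : ¬ DifferentiableAt ℝ G 0 := by
          intro h
          apply hab
          rw [hadef, hbdef]
          exact (h.derivWithin ((uniqueDiffOn_Icc hFs) 0 ⟨le_rfl, hFs.le⟩)).symm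
        rw [hbne, neg_zero, hFi0, deriv_zero_of_not_differentiableAt hGnd]
    · -- x > 0
      have hFixpos : 0 < Fi x := by
        rcases eq_or_lt_of_le (hFinneg x hx) with h | h
        · exfalso
          have := hE x hlt
          rw [← h, hΦ0] at this
          linarith
        · exact h
      have hGFi : G (Fi x) < M := hGlt (Fi x) ⟨hFinneg x hx, hlt⟩
      have hgd := hgdAt (Fi x) ⟨hFixpos, lt_of_lt_of_le hlt hFmFs⟩ hGFi
      have hFid := hFidermain x hlt
      rw [max_eq_left (hFinneg x hx)] at hFid
      have hcomp : HasDerivAt (fun y => g (Fi y))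
          (-(deriv G (Fi x)) / g (Fi x) * g (Fi x)) x := hgd.comp x hFid
      have hevd : deriv F =ᶠ[𝓝 x] fun y => g (Fi y) := by
        have hUm : {y | Fi y < Fm} ∈ 𝓝 x := (hFicont x).preimage_mem_nhds (Iio_mem_nhds hlt)
        filter_upwards [hUm, Ioi_mem_nhds hxpos] with y hy1 hy2
        have hd := hFidermain y hy1
        rw [max_eq_left (hFinneg y hy2.le)] at hd
        exact (((hFev y hy2).hasDerivAt_iff).2 hd).deriv
      have hD : HasDerivAt (deriv F) (-(deriv G (Fi x)) / g (Fi x) * g (Fi x)) x :=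
        (hevd.hasDerivAt_iff).2 hcomp
      rw [hD.deriv, div_mul_cancel₀ _ (hgpos (Fi x) ⟨hFinneg x hx, hlt⟩).ne', neg_neg]
  exact ⟨F, hF0, fun x hx => hderiv x hx, hFmonoOn, fun x hx => hFbound x hx, hFtend,
    fun x hx hlt => hsecond x hx hlt⟩
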